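/- Let A ∈ ℝ^{d×d} be a positive definite matrix, let M, M' ∈ ℝ^{d×d'} be matrices, let φ ∈ ℝ^d be a vector, and let β > 0. If ‖A^{1/2}(M − M')‖_F ≤ √β, then ‖(M − M')ᵀ φ‖₂ ≤ √(β · φᵀ A^{-1} φ). -/

import Mathlib

open Matrix Finset

/-- The Frobenius norm of a matrix. -/
noncomputable def frobNorm {d d' : ℕ} (Y : Matrix (Fin d) (Fin d') ℝ) : ℝ :=
  Real.sqrt (∑ i, ∑ j, (Y i j) ^ 2)

/-- The positive semidefinite square root of a positive semidefinite matrix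
(the definition of `Matrix.PosSemidef.sqrt` in the older Mathlib, since removed). -/
noncomputable def posSemidefSqrt {n : Type*} [Fintype n] [DecidableEq n]
    {A : Matrix n n ℝ} (hA : A.PosSemidef) : Matrix n n ℝ :=
  hA.1.eigenvectorUnitary.1 * diagonal ((↑) ∘ (Real.sqrt ·) ∘ hA.1.eigenvalues) *
    (star hA.1.eigenvectorUnitary : Matrix n n ℝ)
theorem posSemidefSqrt_mul_self_aux {d : ℕ} (A : Matrix (Fin d) (Fin d) ℝ) (hA : A.PosDef) :
    posSemidefSqrt hA.posSemidef * posSemidefSqrt hA.posSemidef = A := by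
  have hU : (star hA.posSemidef.1.eigenvectorUnitary : Matrix (Fin d) (Fin d) ℝ) *
      hA.posSemidef.1.eigenvectorUnitary.1 = 1 := Unitary.coe_star_mul_self _
  conv_rhs => rw [hA.posSemidef.1.spectral_theorem]
  simp only [posSemidefSqrt, Unitary.conjStarAlgAut_apply]
  rw [show ∀ a b c e f g : Matrix (Fin d) (Fin d) ℝ, a * b * c * (e * f * g) = a * b * (c * e) * f * g
    from fun _ _ _ _ _ _ => by simp only [Matrix.mul_assoc], hU, Matrix.mul_one,
    Matrix.mul_assoc _ (diagonal _) (diagonal _), diagonal_mul_diagonal]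
  congr 3
  funext i
  simp [Real.mul_self_sqrt (hA.posSemidef.eigenvalues_nonneg i)]
theorem posSemidefSqrt_isHermitian_aux {d : ℕ} (A : Matrix (Fin d) (Fin d) ℝ) (hA : A.PosDef) :
    (posSemidefSqrt hA.posSemidef).IsHermitian := by
  simp only [posSemidefSqrt, IsHermitian, conjTranspose_mul, Matrix.mul_assoc]
  simp [Matrix.star_eq_conjTranspose]


/-- Frobenius-ball analogue of Lemma 2: if `‖A^{1/2}(M − M')‖_F ≤ √β` then
`‖(M − M')ᵀ φ‖₂ ≤ √(β · φᵀ A⁻¹ φ)`. -/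
theorem confidence_ball_error_bound_frobenius {d d' : ℕ}
    (A : Matrix (Fin d) (Fin d) ℝ) (hA : A.PosDef)
    (M M' : Matrix (Fin d) (Fin d') ℝ) (φ : Fin d → ℝ) (β : ℝ) (hβ : 0 < β)
    (h : frobNorm (posSemidefSqrt hA.posSemidef * (M - M')) ≤ Real.sqrt β) :
    Real.sqrt (∑ j, (((M - M')ᵀ *ᵥ φ) j) ^ 2) ≤
      Real.sqrt (β * (φ ⬝ᵥ (A⁻¹ *ᵥ φ))) := by
  set S := posSemidefSqrt hA.posSemidef with hSdef
  set Y := S * (M - M') with hYdef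
  have hSS : S * S = A := posSemidefSqrt_mul_self_aux A hA
  have hSherm : S.IsHermitian := posSemidefSqrt_isHermitian_aux A hA
  have hdet : IsUnit S.det := by
    have hdA : 0 < A.det := hA.det_pos
    rw [← hSS, det_mul] at hdA
    have : S.det ≠ 0 := by
      intro h0; rw [h0, mul_zero] at hdA; exact lt_irrefl 0 hdA
    exact isUnit_iff_ne_zero.mpr this
  have hSinv : S * S⁻¹ = 1 := mul_nonsing_inv _ hdet
  have hSinvherm : S⁻¹.IsHermitian := hSherm.inv
  have hAinv : A⁻¹ = S⁻¹ * S⁻¹ := by rw [← hSS, Matrix.mul_inv_rev]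
  set v := S⁻¹ *ᵥ φ with hvdef
  -- key rewriting: (M - M')ᵀ *ᵥ φ = Yᵀ *ᵥ v
  have hST : Sᵀ = S := by
    have := hSherm
    rwa [Matrix.IsHermitian, conjTranspose_eq_transpose_of_trivial] at this
  have hkey : (M - M')ᵀ *ᵥ φ = Yᵀ *ᵥ v := by
    rw [hYdef, hvdef, transpose_mul, hST, ← mulVec_mulVec (S⁻¹ *ᵥ φ) (M - M')ᵀ S,
      mulVec_mulVec φ S S⁻¹, hSinv, one_mulVec]
  -- v ⬝ᵥ v = φ ⬝ᵥ A⁻¹ *ᵥ φ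
  have hvv : ∑ i, (v i) ^ 2 = φ ⬝ᵥ (A⁻¹ *ᵥ φ) := by
    have hSinvT : S⁻¹ᵀ = S⁻¹ := by
      have := hSinvherm
      rwa [Matrix.IsHermitian, conjTranspose_eq_transpose_of_trivial] at this
    have : φ ⬝ᵥ (A⁻¹ *ᵥ φ) = v ⬝ᵥ v := by
      rw [hAinv, ← mulVec_mulVec, dotProduct_mulVec φ S⁻¹, hvdef,
        ← mulVec_transpose, hSinvT]
    rw [this, dotProduct]
    simp [sq]
  -- Frobenius bound: ∑ i, ∑ j, (Y i j)^2 ≤ β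
  have hF : ∑ i, ∑ j, (Y i j) ^ 2 ≤ β := by
    have hnn : (0:ℝ) ≤ ∑ i, ∑ j, (Y i j) ^ 2 :=
      Finset.sum_nonneg fun i _ => Finset.sum_nonneg fun j _ => sq_nonneg _
    rw [← Real.sqrt_le_sqrt_iff hβ.le]
    simpa [frobNorm, hYdef] using h
  -- Cauchy-Schwarz per column
  have hcs : ∀ j, ((Yᵀ *ᵥ v) j) ^ 2 ≤ (∑ i, (Y i j) ^ 2) * (∑ i, (v i) ^ 2) := by
    intro j
    have : (Yᵀ *ᵥ v) j = ∑ i, Y i j * v i := by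
      simp [mulVec, dotProduct, transpose, mul_comm]
    rw [this]
    exact Finset.sum_mul_sq_le_sq_mul_sq _ _ _
  have hsum : ∑ j, (((M - M')ᵀ *ᵥ φ) j) ^ 2 ≤ β * (φ ⬝ᵥ (A⁻¹ *ᵥ φ)) := by
    calc ∑ j, (((M - M')ᵀ *ᵥ φ) j) ^ 2
        = ∑ j, ((Yᵀ *ᵥ v) j) ^ 2 := by rw [hkey]
      _ ≤ ∑ j, (∑ i, (Y i j) ^ 2) * (∑ i, (v i) ^ 2) :=
          Finset.sum_le_sum fun j _ => hcs j
      _ = (∑ j, ∑ i, (Y i j) ^ 2) * (∑ i, (v i) ^ 2) := by rw [Finset.sum_mul]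
      _ = (∑ i, ∑ j, (Y i j) ^ 2) * (∑ i, (v i) ^ 2) := by rw [Finset.sum_comm]
      _ ≤ β * (∑ i, (v i) ^ 2) := by
          apply mul_le_mul_of_nonneg_right hF
          exact Finset.sum_nonneg fun i _ => sq_nonneg _
      _ = β * (φ ⬝ᵥ (A⁻¹ *ᵥ φ)) := by rw [hvv]
  exact Real.sqrt_le_sqrt hsum
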